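/- arXiv:1507.03055 — 4 statements merged into one kernel-verified Lean document; each statement's English description precedes it below -/
import Mathlib

section
/- For every nonnegative integer n, Σ_{k=0}^n C(n,k)(-1)^{k+1} (E_k(1/2) - 1/2^k) = E_n(1/2) - 1/2^n; that is, the sequence E_n(1/2) - 1/2^n is self-dual with respect to the transform a_n ↦ Σ_{k=0}^n C(n,k)(-1)^{k+1} a_k. -/
open Finset PowerSeries

/-- Bernoulli polynomials evaluated at a real number. -/
noncomputable def bernoulliPoly (n : ℕ) (x : ℝ) : ℝ :=
  ((Polynomial.bernoulli n).map (algebraMap ℚ ℝ)).eval x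

/-- Euler polynomials `E_n(x)` defined via `2 e^{xt}/(e^t+1) = ∑ E_n(x) t^n/n!`. -/
noncomputable def eulerPoly (n : ℕ) (x : ℝ) : ℝ :=
  (n.factorial : ℝ) * PowerSeries.coeff (R := ℝ) n
    (2 * PowerSeries.mk (fun k => x ^ k / (k.factorial : ℝ)) * (PowerSeries.exp ℝ + 1)⁻¹)

noncomputable def euA : PowerSeries ℝ :=
  2 * rescale (1/2 : ℝ) (exp ℝ) * (exp ℝ + 1)⁻¹ - rescale (1/2 : ℝ) (exp ℝ)

lemma eulerPoly_half (k : ℕ) :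
    eulerPoly k (1/2) - 1 / 2 ^ k = (k.factorial : ℝ) * PowerSeries.coeff (R := ℝ) k euA := by
  have hmk : PowerSeries.mk (fun j => (1/2:ℝ) ^ j / (j.factorial : ℝ))
      = rescale (1/2:ℝ) (exp ℝ) := by
    ext j; simp [coeff_rescale, coeff_exp]; ring
  rw [eulerPoly, hmk, euA, map_sub, mul_sub, coeff_rescale, coeff_exp]
  have hk : (k.factorial : ℝ) ≠ 0 := Nat.cast_ne_zero.2 k.factorial_ne_zero
  field_simp
  rw [map_div₀, map_one, map_natCast, mul_sub, one_div_pow,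
    show (k.factorial : ℝ) * 2 ^ k * (1 / 2 ^ k * (1 / (k.factorial : ℝ))) = 1 by field_simp]
  ring

lemma key_identity : exp ℝ * rescale (-1 : ℝ) euA = - euA := by
  set u := rescale (1/2 : ℝ) (exp ℝ) with hu
  set v := rescale (-(1/2) : ℝ) (exp ℝ) with hv
  set e' := rescale (-1 : ℝ) (exp ℝ) with he'
  have hinv : exp ℝ * e' = 1 := by
    have h := exp_mul_exp_eq_exp_add (1:ℝ) (-1)
    rw [rescale_one] at h
    simp only [RingHom.id_apply] at h
    rw [he', h]
    norm_num [rescale_zero]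
  have hvexp : v * exp ℝ = u := by
    have h := exp_mul_exp_eq_exp_add (-(1/2):ℝ) 1
    rw [rescale_one] at h
    simp only [RingHom.id_apply] at h
    rw [hv, hu, h]; norm_num
  have hue' : u * e' = v := by
    have h := exp_mul_exp_eq_exp_add ((1/2):ℝ) (-1)
    rw [hu, he', hv, h]; norm_num
  have hc1 : constantCoeff (R := ℝ) (exp ℝ + 1) ≠ 0 := by
    norm_num [constantCoeff_exp]
  have hA : euA * (exp ℝ + 1) = u * (1 - exp ℝ) := by
    rw [euA, sub_mul, mul_assoc, PowerSeries.inv_mul_cancel _ hc1]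
    ring
  have hres : rescale (-1 : ℝ) (exp ℝ + 1) = e' + 1 := by
    rw [map_add, map_one, he']
  have hA' : rescale (-1 : ℝ) euA * (e' + 1) = v * (1 - e') := by
    have := congrArg (rescale (-1 : ℝ)) hA
    rw [map_mul, map_mul, map_sub, map_one, hres] at this
    have hru : rescale (-1:ℝ) u = v := by rw [hu, rescale_rescale]; norm_num; exact hv.symm
    rw [hru] at this
    exact this
  have hne : (exp ℝ + 1) * (e' + 1) ≠ 0 := by
    intro h
    have := congrArg (constantCoeff (R := ℝ)) h
    rw [map_mul, map_zero] at this
    have hc2 : constantCoeff (R := ℝ) (e' + 1) = 2 := by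
      rw [map_add, map_one, he', ← coeff_zero_eq_constantCoeff_apply, coeff_rescale]
      norm_num [coeff_exp]
    rw [hc2] at this
    simp [constantCoeff_exp] at this
  apply mul_right_cancel₀ hne
  calc exp ℝ * rescale (-1:ℝ) euA * ((exp ℝ + 1) * (e' + 1))
      = exp ℝ * (rescale (-1:ℝ) euA * (e' + 1)) * (exp ℝ + 1) := by ring
    _ = exp ℝ * (v * (1 - e')) * (exp ℝ + 1) := by rw [hA']
    _ = -(u * (1 - exp ℝ)) * (e' + 1) := by
        linear_combination (-2*v*exp ℝ) * hinv + (-(1-exp ℝ)*(e'+1)) * hvexp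
    _ = -euA * ((exp ℝ + 1) * (e' + 1)) := by rw [← hA]; ring

theorem stmt3 (n : ℕ) :
    ∑ k ∈ Finset.range (n + 1),
        (n.choose k : ℝ) * (-1) ^ (k + 1) * (eulerPoly k (1 / 2) - 1 / 2 ^ k) =
      eulerPoly n (1 / 2) - 1 / 2 ^ n := by
  have key := congrArg (PowerSeries.coeff (R := ℝ) n) key_identity
  rw [coeff_mul, Finset.Nat.sum_antidiagonal_eq_sum_range_succ_mk, map_neg] at key
  simp only [coeff_exp, coeff_rescale] at key
  rw [eulerPoly_half]
  calc ∑ k ∈ Finset.range (n + 1),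
        (n.choose k : ℝ) * (-1) ^ (k + 1) * (eulerPoly k (1 / 2) - 1 / 2 ^ k)
      = ∑ k ∈ Finset.range (n + 1),
        (n.choose (n-k) : ℝ) * (-1) ^ ((n-k) + 1) * (eulerPoly (n-k) (1 / 2) - 1 / 2 ^ (n-k)) :=
        (Finset.sum_range_reflect _ _).symm
    _ = ∑ k ∈ Finset.range (n + 1), (-(n.factorial : ℝ)) *
          ((algebraMap ℚ ℝ) (1 / (k.factorial : ℚ)) *
            ((-1:ℝ) ^ (n-k) * PowerSeries.coeff (R := ℝ) (n-k) euA)) := by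
        refine Finset.sum_congr rfl fun k hk => ?_
        have hkn : k ≤ n := Nat.lt_succ_iff.1 (Finset.mem_range.1 hk)
        rw [eulerPoly_half]
        have hfact : ((n.choose (n-k) : ℝ)) * ((n-k).factorial : ℝ) * (k.factorial : ℝ)
            = (n.factorial : ℝ) := by
          have h := Nat.choose_mul_factorial_mul_factorial (Nat.sub_le n k)
          rw [Nat.sub_sub_self hkn] at h
          exact_mod_cast congrArg (Nat.cast : ℕ → ℝ) h
        have hkf : (k.factorial : ℝ) ≠ 0 := Nat.cast_ne_zero.2 k.factorial_ne_zero
        have halg : (algebraMap ℚ ℝ) (1 / (k.factorial : ℚ)) = 1 / (k.factorial : ℝ) := by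
          push_cast; simp
        rw [halg, pow_succ, ← hfact]
        field_simp
    _ = -(n.factorial : ℝ) * ∑ k ∈ Finset.range (n + 1),
          ((algebraMap ℚ ℝ) (1 / (k.factorial : ℚ)) *
            ((-1:ℝ) ^ (n-k) * PowerSeries.coeff (R := ℝ) (n-k) euA)) := by
        rw [Finset.mul_sum]
    _ = (n.factorial : ℝ) * PowerSeries.coeff (R := ℝ) n euA := by
        rw [key]; ring
end

section
/- For every nonnegative integer n, Σ_{k=0}^n C(n,k)(-1)^n (-1)^k B_k = B_n + (-1)^n n. -/
open Finset

theorem stmt7 (n : ℕ) :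
    ∑ k ∈ Finset.range (n + 1), (n.choose k : ℚ) * (-1) ^ n * ((-1) ^ k * bernoulli k) =
      bernoulli n + (-1) ^ n * n := by
  have h : ∀ k, ((-1 : ℚ)) ^ k * bernoulli k = bernoulli' k := by
    intro k
    rw [bernoulli, ← mul_assoc, ← pow_add, Even.neg_one_pow ⟨k, rfl⟩, one_mul]
  calc ∑ k ∈ Finset.range (n + 1), (n.choose k : ℚ) * (-1) ^ n * ((-1) ^ k * bernoulli k)
      = (-1) ^ n * ∑ k ∈ Finset.range (n + 1), (n.choose k : ℚ) * bernoulli' k := by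
        rw [Finset.mul_sum]; exact Finset.sum_congr rfl fun k _ => by rw [h]; ring
    _ = (-1) ^ n * (n + bernoulli' n) := by
        rw [Finset.sum_range_succ, sum_bernoulli', Nat.choose_self]; push_cast; ring
    _ = bernoulli n + (-1) ^ n * n := by rw [bernoulli]; ring
end

section
/- Let a: ℕ → ℝ be a sequence with exponential generating function a*(x) = Σ_{n≥0} a_n x^n/n! (as a formal power series). Then -a_n = Σ_{k=0}^n C(n,k)(-1)^n a_k for all n if and only if a*(x)e^{x/2} is an odd formal power series. -/
open Finset

lemma aux14 (a : ℕ → ℝ) (n : ℕ) :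
    (-a n = ∑ k ∈ Finset.range (n + 1), (n.choose k : ℝ) * (-1) ^ n * a k) ↔
    ((-1 : ℝ) ^ n * (a n / (n.factorial : ℝ)) =
      -∑ k ∈ Finset.range (n + 1),
        (a k / (k.factorial : ℝ)) * (((n - k).factorial : ℝ))⁻¹) := by
  have hfac : (n.factorial : ℝ) ≠ 0 := Nat.cast_ne_zero.mpr n.factorial_ne_zero
  have hsum : ∑ k ∈ Finset.range (n + 1),
      (a k / (k.factorial : ℝ)) * (((n - k).factorial : ℝ))⁻¹ =
      (∑ k ∈ Finset.range (n + 1), (n.choose k : ℝ) * a k) / (n.factorial : ℝ) := by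
    rw [Finset.sum_div]
    refine Finset.sum_congr rfl fun k hk => ?_
    have hk' : k ≤ n := by
      have := Finset.mem_range.mp hk; omega
    rw [Nat.cast_choose ℝ hk']
    have h1 : (k.factorial : ℝ) ≠ 0 := Nat.cast_ne_zero.mpr k.factorial_ne_zero
    have h2 : ((n - k).factorial : ℝ) ≠ 0 := Nat.cast_ne_zero.mpr (n - k).factorial_ne_zero
    field_simp
  rw [hsum]
  have hpull : ∑ k ∈ Finset.range (n + 1), (n.choose k : ℝ) * (-1) ^ n * a k =
      (-1 : ℝ) ^ n * ∑ k ∈ Finset.range (n + 1), (n.choose k : ℝ) * a k := by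
    rw [Finset.mul_sum]; exact Finset.sum_congr rfl fun k _ => by ring
  rw [hpull]
  set S := ∑ k ∈ Finset.range (n + 1), (n.choose k : ℝ) * a k with hS
  rcases Nat.even_or_odd n with he | ho
  · rw [he.neg_one_pow]
    constructor <;> intro h
    · field_simp
      linarith
    · field_simp at h
      linarith
  · rw [ho.neg_one_pow]
    constructor <;> intro h
    · have h' : a n = S := by linarith
      rw [h']; ring
    · have h' : a n / (n.factorial : ℝ) = S / (n.factorial : ℝ) := by linarith
      have h'' : a n = S := mul_right_cancel₀ hfac ((div_eq_div_iff hfac hfac).mp h')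
      linarith

theorem stmt14 (a : ℕ → ℝ) :
    (∀ n, -a n = ∑ k ∈ Finset.range (n + 1), (n.choose k : ℝ) * (-1) ^ n * a k) ↔
      PowerSeries.rescale (-1 : ℝ)
          (PowerSeries.mk (fun n => a n / (n.factorial : ℝ)) *
            PowerSeries.rescale (1 / 2 : ℝ) (PowerSeries.exp ℝ)) =
        -(PowerSeries.mk (fun n => a n / (n.factorial : ℝ)) *
          PowerSeries.rescale (1 / 2 : ℝ) (PowerSeries.exp ℝ)) := by
  set f := PowerSeries.mk (fun n => a n / (n.factorial : ℝ)) with hf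
  have hE0 : PowerSeries.constantCoeff (R := ℝ) (PowerSeries.rescale (1/2 : ℝ) (PowerSeries.exp ℝ)) = 1 := by
    rw [← PowerSeries.coeff_zero_eq_constantCoeff, PowerSeries.coeff_rescale,
      PowerSeries.coeff_exp]
    norm_num
  have hEne : PowerSeries.rescale (1/2 : ℝ) (PowerSeries.exp ℝ) ≠ 0 := by
    intro h
    rw [h, map_zero] at hE0
    norm_num at hE0
  have hmul : ∀ g h : PowerSeries ℝ, g = h ↔
      g * PowerSeries.rescale (1/2 : ℝ) (PowerSeries.exp ℝ) =
        h * PowerSeries.rescale (1/2 : ℝ) (PowerSeries.exp ℝ) :=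
    fun g h => ⟨fun x => by rw [x], fun x => mul_right_cancel₀ hEne x⟩
  have key : (PowerSeries.rescale (-1 : ℝ) (f * PowerSeries.rescale (1/2 : ℝ) (PowerSeries.exp ℝ)) =
      -(f * PowerSeries.rescale (1/2 : ℝ) (PowerSeries.exp ℝ))) ↔
      (PowerSeries.rescale (-1 : ℝ) f = -(f * PowerSeries.exp ℝ)) := by
    rw [map_mul, PowerSeries.rescale_rescale, hmul _ _, mul_assoc,
      PowerSeries.exp_mul_exp_eq_exp_add, neg_mul, mul_assoc,
      PowerSeries.exp_mul_exp_eq_exp_add,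
      show (1/2 * -1 + 1/2 : ℝ) = 0 by norm_num,
      show (1/2 + 1/2 : ℝ) = 1 by norm_num,
      PowerSeries.rescale_zero, PowerSeries.rescale_one]
    simp [PowerSeries.constantCoeff_exp]
  rw [key, PowerSeries.ext_iff]
  refine forall_congr' fun n => ?_
  rw [aux14]
  rw [PowerSeries.coeff_rescale, map_neg, PowerSeries.coeff_mul,
    Finset.Nat.sum_antidiagonal_eq_sum_range_succ_mk]
  simp only [hf, PowerSeries.coeff_mk, PowerSeries.coeff_exp]
  constructor <;> intro h <;> rw [h] <;> congr 1 <;>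
    refine Finset.sum_congr rfl fun k _ => ?_ <;>
    · rw [map_div₀, map_one, map_natCast, one_div]
end

section
/- Suppose a: ℕ → ℝ satisfies -a_n = Σ_{k=0}^n C(n,k)(-1)^n a_k for all n (self-dual with respect to D₄). Then for any function f: ℕ → ℝ and all n ≥ 0, Σ_{k=0}^n C(n,k) (f(k) + Σ_{j=0}^k (-1)^{n-j} C(k,j) f(j)) a_{n-k} = 0. -/
open Finset

private lemma hsq (p : ℕ) : ((-1 : ℝ) ^ p) * ((-1 : ℝ) ^ p) = 1 := by
  rw [← mul_pow]; norm_num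

theorem stmt16 (a : ℕ → ℝ)
    (ha : ∀ n, -a n = ∑ k ∈ Finset.range (n + 1), (n.choose k : ℝ) * (-1) ^ n * a k)
    (f : ℕ → ℝ) (n : ℕ) :
    ∑ k ∈ Finset.range (n + 1), (n.choose k : ℝ) *
        (f k + ∑ j ∈ Finset.range (k + 1), (-1) ^ (n - j) * (k.choose j : ℝ) * f j) *
        a (n - k) = 0 := by
  -- key consequence of self-duality
  have key : ∀ m, ∑ k ∈ Finset.range (m + 1), (m.choose k : ℝ) * a k
      = -((-1 : ℝ) ^ m * a m) := by
    intro m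
    have h := ha m
    have h2 : ∑ k ∈ Finset.range (m + 1), (m.choose k : ℝ) * (-1) ^ m * a k
        = (-1 : ℝ) ^ m * ∑ k ∈ Finset.range (m + 1), (m.choose k : ℝ) * a k := by
      rw [Finset.mul_sum]; exact Finset.sum_congr rfl fun k _ => by ring
    rw [h2] at h
    rcases Nat.even_or_odd m with hm | hm
    · rw [hm.neg_one_pow] at h ⊢; linarith
    · rw [hm.neg_one_pow] at h ⊢; linarith
  -- inner sum evaluation
  have inner : ∀ j ∈ Finset.range (n + 1),
      ∑ k ∈ Finset.Ico j (n + 1), (n.choose k : ℝ) * ((k.choose j : ℝ) * a (n - k))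
        = (n.choose j : ℝ) * (-((-1 : ℝ) ^ (n - j) * a (n - j))) := by
    intro j hj
    rw [Finset.mem_range, Nat.lt_succ_iff] at hj
    rw [Finset.sum_Ico_eq_sum_range]
    have hlen : n + 1 - j = (n - j) + 1 := by omega
    rw [hlen]
    have step : ∀ i ∈ Finset.range (n - j + 1),
        (n.choose (j + i) : ℝ) * (((j + i).choose j : ℝ) * a (n - (j + i)))
          = (n.choose j : ℝ) * (((n - j).choose i : ℝ) * a (n - j - i)) := by
      intro i hi
      rw [Finset.mem_range] at hi
      have h1 : j + i ≤ n := by omega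
      have hc : n.choose (j + i) * (j + i).choose j = n.choose j * (n - j).choose i := by
        have := Nat.choose_mul (n := n) (Nat.le_add_right j i)
        simpa using this
      have he : n - (j + i) = n - j - i := by omega
      rw [he]
      have hc' : (n.choose (j + i) : ℝ) * ((j + i).choose j : ℝ)
          = (n.choose j : ℝ) * ((n - j).choose i : ℝ) := by exact_mod_cast hc
      calc (n.choose (j + i) : ℝ) * (((j + i).choose j : ℝ) * a (n - j - i))
          = ((n.choose (j + i) : ℝ) * ((j + i).choose j : ℝ)) * a (n - j - i) := by ring
        _ = ((n.choose j : ℝ) * ((n - j).choose i : ℝ)) * a (n - j - i) := by rw [hc']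
        _ = (n.choose j : ℝ) * (((n - j).choose i : ℝ) * a (n - j - i)) := by ring
    rw [Finset.sum_congr rfl step, ← Finset.mul_sum]
    congr 1
    rw [← key (n - j)]
    set m := n - j with hm
    have hrefl : ∑ i ∈ Finset.range (m + 1), (m.choose i : ℝ) * a (m - i)
        = ∑ i ∈ Finset.range (m + 1), (m.choose (m - i) : ℝ) * a (m - i) := by
      refine Finset.sum_congr rfl fun i hi => ?_
      rw [Finset.mem_range, Nat.lt_succ_iff] at hi
      rw [Nat.choose_symm hi]
    rw [hrefl]
    have := Finset.sum_range_reflect (fun i => (m.choose i : ℝ) * a i) (m + 1)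
    simpa using this
  -- the double sum part
  have main2 : ∑ k ∈ Finset.range (n + 1), (n.choose k : ℝ) *
      (∑ j ∈ Finset.range (k + 1), (-1 : ℝ) ^ (n - j) * (k.choose j : ℝ) * f j) * a (n - k)
      = -∑ k ∈ Finset.range (n + 1), (n.choose k : ℝ) * f k * a (n - k) := by
    have expand : ∀ k ∈ Finset.range (n + 1),
        (n.choose k : ℝ) *
          (∑ j ∈ Finset.range (k + 1), (-1 : ℝ) ^ (n - j) * (k.choose j : ℝ) * f j) * a (n - k)
        = ∑ j ∈ Finset.range (k + 1),
            (-1 : ℝ) ^ (n - j) * f j * ((n.choose k : ℝ) * ((k.choose j : ℝ) * a (n - k))) := by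
      intro k _
      rw [Finset.mul_sum, Finset.sum_mul]
      exact Finset.sum_congr rfl fun j _ => by ring
    rw [Finset.sum_congr rfl expand]
    simp only [Finset.range_eq_Ico]
    rw [← Finset.sum_Ico_Ico_comm 0 (n + 1)
      (fun j k => (-1 : ℝ) ^ (n - j) * f j * ((n.choose k : ℝ) * ((k.choose j : ℝ) * a (n - k))))]
    rw [← Finset.sum_neg_distrib]
    refine Finset.sum_congr rfl fun j hj => ?_
    rw [← Finset.mul_sum]
    have hj' : j ∈ Finset.range (n + 1) := Finset.mem_range.mpr (Finset.mem_Ico.mp hj).2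
    rw [inner j hj']
    have := hsq (n - j)
    linear_combination (-((n.choose j : ℝ) * f j * a (n - j))) * this
  calc ∑ k ∈ Finset.range (n + 1), (n.choose k : ℝ) *
        (f k + ∑ j ∈ Finset.range (k + 1), (-1) ^ (n - j) * (k.choose j : ℝ) * f j) *
        a (n - k)
      = (∑ k ∈ Finset.range (n + 1), (n.choose k : ℝ) * f k * a (n - k))
        + ∑ k ∈ Finset.range (n + 1), (n.choose k : ℝ) *
          (∑ j ∈ Finset.range (k + 1), (-1 : ℝ) ^ (n - j) * (k.choose j : ℝ) * f j) * a (n - k) := by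
        rw [← Finset.sum_add_distrib]
        exact Finset.sum_congr rfl fun k _ => by ring
    _ = 0 := by rw [main2]; ring
end
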